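/- For all constants C₃, C₄, c₂ > 0, there exists κ > 0 such that for all x with 0 < |x| < κ, the series Σ_{n=0}^∞ |x|^{2^n} · C₃^n · C₄^{n²} converges and its sum is less than c₂. -/

import Mathlib

lemma aux_nsq (n : ℕ) : n + n ^ 2 ≤ 2 ^ (n + 1) := by
  induction n with
  | zero => norm_num
  | succ k ih =>
    rcases Nat.lt_or_ge k 2 with h | h
    · interval_cases k <;> norm_num
    · have h1 : 2 * k + 2 ≤ k + k ^ 2 := by nlinarith
      calc (k + 1) + (k + 1) ^ 2 = (k + k ^ 2) + (2 * k + 2) := by ring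
        _ ≤ 2 ^ (k + 1) + 2 ^ (k + 1) := add_le_add ih (h1.trans ih)
        _ = 2 ^ (k + 2) := by ring

/-- **Bounding lemma, second half.** The series `Σ |x|^{2^n} C₃^n C₄^{n²}` converges and
its sum is `< c₂` once `|x|` is small. -/
theorem stmt14 (C₃ C₄ c₂ : ℝ) (hC₃ : 0 < C₃) (hC₄ : 0 < C₄) (hc₂ : 0 < c₂) :
    ∃ κ : ℝ, 0 < κ ∧ ∀ x : ℝ, 0 < |x| → |x| < κ →
      Summable (fun n : ℕ => |x| ^ (2 ^ n) * C₃ ^ n * C₄ ^ (n ^ 2)) ∧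
      (∑' n : ℕ, |x| ^ (2 ^ n) * C₃ ^ n * C₄ ^ (n ^ 2)) < c₂ := by
  set M : ℝ := max 1 (max C₃ C₄) with hM
  have hM1 : (1 : ℝ) ≤ M := le_max_left _ _
  have hMpos : (0 : ℝ) < M := lt_of_lt_of_le one_pos hM1
  have hC₃M : C₃ ≤ M := le_trans (le_max_left _ _) (le_max_right _ _)
  have hC₄M : C₄ ≤ M := le_trans (le_max_right _ _) (le_max_right _ _)
  have hM2 : (0 : ℝ) < M ^ 2 := by positivity
  refine ⟨min (1 / (2 * M ^ 2)) (c₂ / (4 * M ^ 2)), lt_min (by positivity) (by positivity),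
    fun x hx hxκ => ?_⟩
  set r : ℝ := |x| with hr
  set q : ℝ := r * M ^ 2 with hq
  have hq0 : 0 < q := by positivity
  have hqhalf : q < 1 / 2 := by
    calc q = r * M ^ 2 := rfl
      _ < (1 / (2 * M ^ 2)) * M ^ 2 := by
          exact mul_lt_mul_of_pos_right (lt_of_lt_of_le hxκ (min_le_left _ _)) hM2
      _ = 1 / 2 := by field_simp
  have hqc : q < c₂ / 4 := by
    calc q = r * M ^ 2 := rfl
      _ < (c₂ / (4 * M ^ 2)) * M ^ 2 :=
          mul_lt_mul_of_pos_right (lt_of_lt_of_le hxκ (min_le_right _ _)) hM2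
      _ = c₂ / 4 := by field_simp
  have hq1 : q < 1 := hqhalf.trans (by norm_num)
  -- term bound
  have key : ∀ n : ℕ, r ^ (2 ^ n) * C₃ ^ n * C₄ ^ (n ^ 2) ≤ q ^ (n + 1) := by
    intro n
    have h1 : C₃ ^ n * C₄ ^ (n ^ 2) ≤ M ^ (2 ^ (n + 1)) := by
      calc C₃ ^ n * C₄ ^ (n ^ 2) ≤ M ^ n * M ^ (n ^ 2) := by
            exact mul_le_mul (pow_le_pow_left₀ hC₃.le hC₃M n)
              (pow_le_pow_left₀ hC₄.le hC₄M _) (by positivity) (by positivity)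
        _ = M ^ (n + n ^ 2) := (pow_add M n (n ^ 2)).symm
        _ ≤ M ^ (2 ^ (n + 1)) := pow_le_pow_right₀ hM1 (aux_nsq n)
    have h2 : r ^ (2 ^ n) * M ^ (2 ^ (n + 1)) = q ^ (2 ^ n) := by
      rw [hq, mul_pow, ← pow_mul]
      congr 1
      rw [pow_succ, Nat.mul_comm]
    have h3 : q ^ (2 ^ n) ≤ q ^ (n + 1) := by
      apply pow_le_pow_of_le_one hq0.le hq1.le
      have := Nat.lt_two_pow_self (n := n); omega
    calc r ^ (2 ^ n) * C₃ ^ n * C₄ ^ (n ^ 2) = r ^ (2 ^ n) * (C₃ ^ n * C₄ ^ (n ^ 2)) := by ring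
      _ ≤ r ^ (2 ^ n) * M ^ (2 ^ (n + 1)) :=
          mul_le_mul_of_nonneg_left h1 (by positivity)
      _ = q ^ (2 ^ n) := h2
      _ ≤ q ^ (n + 1) := h3
  have hgeo : Summable (fun n : ℕ => q ^ (n + 1)) := by
    simpa [pow_succ, mul_comm] using (summable_geometric_of_lt_one hq0.le hq1).mul_left q
  have hnonneg : ∀ n : ℕ, 0 ≤ r ^ (2 ^ n) * C₃ ^ n * C₄ ^ (n ^ 2) := fun n => by positivity
  have hsum : Summable (fun n : ℕ => r ^ (2 ^ n) * C₃ ^ n * C₄ ^ (n ^ 2)) :=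
    Summable.of_nonneg_of_le hnonneg key hgeo
  refine ⟨hsum, ?_⟩
  have htsum_geo : (∑' n : ℕ, q ^ (n + 1)) = q * (1 - q)⁻¹ := by
    have := tsum_geometric_of_lt_one hq0.le hq1
    calc (∑' n : ℕ, q ^ (n + 1)) = ∑' n : ℕ, q * q ^ n := by
          simp [pow_succ, mul_comm]
      _ = q * ∑' n : ℕ, q ^ n := tsum_mul_left
      _ = q * (1 - q)⁻¹ := by rw [this]
  have hle : (∑' n : ℕ, r ^ (2 ^ n) * C₃ ^ n * C₄ ^ (n ^ 2)) ≤ ∑' n : ℕ, q ^ (n + 1) :=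
    Summable.tsum_le_tsum key hsum hgeo
  have hfinal : q * (1 - q)⁻¹ < c₂ := by
    have h1q : (1 : ℝ) / 2 < 1 - q := by linarith
    have hinv : (1 - q)⁻¹ < 2 := by
      rw [inv_lt_comm₀ (by linarith) (by norm_num)]
      linarith
    calc q * (1 - q)⁻¹ ≤ q * 2 := mul_le_mul_of_nonneg_left hinv.le hq0.le
      _ < (c₂ / 4) * 2 := by nlinarith
      _ < c₂ := by linarith
  calc (∑' n : ℕ, r ^ (2 ^ n) * C₃ ^ n * C₄ ^ (n ^ 2)) ≤ ∑' n : ℕ, q ^ (n + 1) := hle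
    _ = q * (1 - q)⁻¹ := htsum_geo
    _ < c₂ := hfinal
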